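/- For integers i ≥ j ≥ 0 define τ_{i,j} = Σ_{1 ≤ p_1 < ⋯ < p_j ≤ i} ∏_{r=1}^{j} (q^{p_r} + q^{−p_r} − 2) ∈ ℤ[q,q^{−1}] (this equals Σ_{1 ≤ p_1 < ⋯ < p_j ≤ i} ∏_{r=1}^{j} (v^{p_r} − v^{−p_r})² with q = v²). Then for all integers k ≥ 0 and n ≥ 0 there exists N such that for all i ≥ N, the element ∏_{s=1}^{n} (q^s − 1) divides τ_{i, i−k} in ℤ[q,q^{−1}]. -/

import Mathlib

open LaurentPolynomial

/-- `τ_{i,j} = Σ_{1 ≤ p₁ < ⋯ < p_j ≤ i} ∏_{r=1}^j (q^{p_r} + q^{−p_r} − 2) ∈ ℤ[q,q^{−1}]`. -/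
noncomputable def tauLP (i j : ℕ) : LaurentPolynomial ℤ :=
  ∑ s ∈ Finset.powersetCard j (Finset.Icc 1 i),
    ∏ p ∈ s, (T (p : ℤ) + T (-(p : ℤ)) - 2)

/-- Product of `q^{m+1+j} - 1` for `j = 0, …, n-1`. -/
noncomputable def Qp (m n : ℕ) : LaurentPolynomial ℤ :=
  ∏ j ∈ Finset.range n, (T ((m + 1 + j : ℕ) : ℤ) - 1)

/-- Gaussian-binomial style divisibility: `∏_{s=1}^n (q^s-1)` divides any product
of `n` consecutive `q^p - 1`. -/
lemma consec (m n : ℕ) : Qp 0 n ∣ Qp m n := by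
  induction m generalizing n with
  | zero => exact dvd_rfl
  | succ m ih =>
    induction n with
    | zero => simp [Qp]
    | succ n ihn =>
      have h1 : Qp (m+1) (n+1) = Qp (m+1) n * (T ((m+2+n : ℕ) : ℤ) - 1) := by
        simp only [Qp]
        rw [Finset.prod_range_succ]
      have h2 : Qp m (n+1) = Qp (m+1) n * (T ((m+1 : ℕ) : ℤ) - 1) := by
        simp only [Qp]
        rw [Finset.prod_range_succ']
        congr 1
        apply Finset.prod_congr rfl
        intro j _
        congr 3
        omega
      have h3 : (T ((m+2+n : ℕ) : ℤ) - 1 : LaurentPolynomial ℤ)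
          = T ((n+1 : ℕ) : ℤ) * (T ((m+1 : ℕ) : ℤ) - 1) + (T ((n+1 : ℕ) : ℤ) - 1) := by
        have := T_add (R := ℤ) ((n+1 : ℕ) : ℤ) ((m+1 : ℕ) : ℤ)
        have hc : ((n+1 : ℕ) : ℤ) + ((m+1 : ℕ) : ℤ) = ((m+2+n : ℕ) : ℤ) := by push_cast; ring
        rw [hc] at this
        linear_combination this
      have key : Qp (m+1) (n+1)
          = (T ((n+1 : ℕ) : ℤ) - 1) * Qp (m+1) n + T ((n+1 : ℕ) : ℤ) * Qp m (n+1) := by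
        rw [h1, h2, h3]; ring
      have h0 : Qp 0 (n+1) = Qp 0 n * (T ((n+1 : ℕ) : ℤ) - 1) := by
        simp only [Qp]
        rw [Finset.prod_range_succ]
        congr 3
        omega
      rw [key]
      refine dvd_add ?_ ((ih (n+1)).mul_left _)
      rw [h0, mul_comm]
      exact mul_dvd_mul_left _ ihn

lemma fac_eq (p : ℕ) : (T (p : ℤ) + T (-(p:ℤ)) - 2 : LaurentPolynomial ℤ)
    = T (-(p:ℤ)) * (T (p:ℤ) - 1)^2 := by
  have h5 : (T (-(p:ℤ)) * T ((p:ℤ)) : LaurentPolynomial ℤ) = 1 := by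
    rw [← T_add]; simp
  linear_combination (2 - T (p:ℤ)) * h5

/-- Pigeonhole: a subset of `{1,…,i}` missing only `k` elements contains a full block
of `n` consecutive integers `t*n+1, …, t*n+n` for some `t ≤ k`. -/
lemma block_exists {k n i : ℕ} (hi : (k+1)*n ≤ i)
    (s : Finset ℕ) (hs : s ⊆ Finset.Icc 1 i) (hcard : s.card = i - k) (hki : k ≤ i) :
    ∃ t, t ≤ k ∧ ∀ p, t*n < p → p ≤ t*n + n → p ∈ s := by
  by_contra hcon
  push_neg at hcon
  have hch : ∀ t, t < k+1 → ∃ p, t*n < p ∧ p ≤ t*n + n ∧ p ∉ s := by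
    intro t ht
    obtain ⟨p, h1, h2, h3⟩ := hcon t (by omega)
    exact ⟨p, h1, h2, h3⟩
  choose f hf1 hf2 hf3 using hch
  set g : ℕ → ℕ := fun t => if ht : t < k+1 then f t ht else 0 with hg
  have hgval : ∀ t (ht : t < k+1), g t = f t ht := by
    intro t ht; simp [hg, Nat.lt_succ_iff.mp ht]
  have hmaps : ∀ t ∈ Finset.range (k+1), g t ∈ Finset.Icc 1 i \ s := by
    intro t ht'
    have ht : t < k+1 := Finset.mem_range.mp ht'
    rw [hgval t ht]
    have e1 : (t+1)*n = t*n + n := by ring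
    have e2 : (t+1)*n ≤ (k+1)*n := Nat.mul_le_mul_right n (by omega)
    refine Finset.mem_sdiff.mpr ⟨Finset.mem_Icc.mpr ⟨?_, ?_⟩, hf3 t ht⟩
    · have := hf1 t ht; omega
    · have := hf2 t ht; omega
  have hcardc : (Finset.Icc 1 i \ s).card = k := by
    rw [Finset.card_sdiff_of_subset hs, Nat.card_Icc, hcard]
    omega
  have hinj : Set.InjOn g (Finset.range (k+1)) := by
    intro t₁ h₁ t₂ h₂ heq
    simp only [Finset.coe_range, Set.mem_Iio] at h₁ h₂
    rw [hgval t₁ h₁, hgval t₂ h₂] at heq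
    by_contra hne
    have a1 := hf1 t₁ h₁; have a2 := hf2 t₁ h₁
    have b1 := hf1 t₂ h₂; have b2 := hf2 t₂ h₂
    rw [heq] at a1 a2
    have e1 : (t₁+1)*n = t₁*n + n := by ring
    have e2 : (t₂+1)*n = t₂*n + n := by ring
    rcases Nat.lt_or_ge t₁ t₂ with h | h
    · have : (t₁+1)*n ≤ t₂*n := Nat.mul_le_mul_right n (by omega)
      omega
    · have ht : t₂ < t₁ := by omega
      have : (t₂+1)*n ≤ t₁*n := Nat.mul_le_mul_right n (by omega)
      omega
  have := Finset.card_le_card_of_injOn g hmaps hinj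
  rw [hcardc, Finset.card_range] at this
  omega

/-- For all `k, n ≥ 0` there exists `N` such that for all `i ≥ N`,
`∏_{s=1}^n (q^s − 1)` divides `τ_{i,i−k}` in `ℤ[q,q^{−1}]`. -/
theorem qfactorial_dvd_tau (k n : ℕ) :
    ∃ N : ℕ, ∀ i : ℕ, N ≤ i →
      (∏ s ∈ Finset.Icc 1 n, (T (s : ℤ) - 1)) ∣ tauLP i (i - k) := by
  rcases Nat.eq_zero_or_pos n with hn | hn
  · refine ⟨0, fun i _ => ?_⟩
    subst hn
    simp
  · refine ⟨(k+1)*n, fun i hi => ?_⟩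
    have hki : k ≤ i := by
      have : k + 1 ≤ (k+1)*n := Nat.le_mul_of_pos_right _ hn
      omega
    unfold tauLP
    apply Finset.dvd_sum
    intro s hsmem
    obtain ⟨hs, hcard⟩ := Finset.mem_powersetCard.mp hsmem
    obtain ⟨t, htk, hblk⟩ := block_exists hi s hs hcard hki
    -- rewrite the goal product
    have hprod : (∏ p ∈ s, (T (p : ℤ) + T (-(p : ℤ)) - 2) : LaurentPolynomial ℤ)
        = (∏ p ∈ s, T (-(p:ℤ))) * (∏ p ∈ s, ((T (p:ℤ) : LaurentPolynomial ℤ) - 1))^2 := by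
      rw [← Finset.prod_pow, ← Finset.prod_mul_distrib]
      exact Finset.prod_congr rfl fun p _ => fac_eq p
    rw [hprod]
    -- the LHS equals Qp 0 n
    have hP : (∏ s' ∈ Finset.Icc 1 n, ((T (s' : ℤ) : LaurentPolynomial ℤ) - 1)) = Qp 0 n := by
      rw [Qp, show Finset.Icc 1 n = Finset.Ico 1 (n+1) by rw [Finset.Ico_add_one_right_eq_Icc],
        Finset.prod_Ico_eq_prod_range]
      apply Finset.prod_congr (by congr 1) fun j _ => by congr 2
    -- block product
    have hB : Qp (t*n) n = ∏ j ∈ Finset.Icc (t*n+1) (t*n+n), ((T (j : ℤ) : LaurentPolynomial ℤ) - 1) := by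
      rw [Qp, show Finset.Icc (t*n+1) (t*n+n) = Finset.Ico (t*n+1) (t*n+n+1) by
        rw [Finset.Ico_add_one_right_eq_Icc], Finset.prod_Ico_eq_prod_range]
      apply Finset.prod_congr (by congr 1; omega) fun j _ => by congr 2
    have hsub : Finset.Icc (t*n+1) (t*n+n) ⊆ s := by
      intro p hp
      obtain ⟨h1, h2⟩ := Finset.mem_Icc.mp hp
      exact hblk p (by omega) (by omega)
    have hchain : (∏ s' ∈ Finset.Icc 1 n, ((T (s' : ℤ) : LaurentPolynomial ℤ) - 1))
        ∣ ∏ p ∈ s, ((T (p:ℤ) : LaurentPolynomial ℤ) - 1) := by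
      rw [hP]
      refine (consec (t*n) n).trans ?_
      rw [hB]
      exact Finset.prod_dvd_prod_of_subset _ _ _ hsub
    exact (dvd_pow hchain two_ne_zero).mul_left _
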